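/- arXiv:2309.11203 — 2 statements merged into one kernel-verified Lean document; each statement's English description precedes it below -/
import Mathlib

section
/- Let n ≥ 2 and let ε be a maximal Gallai coloring of the complete graph K_n, i.e., an edge coloring with no rainbow cycle whose image has exactly n − 1 colors. Then ε has a singleton color: there exists a color c in the image of ε such that exactly one edge of K_n is colored c. -/
/-- The edge set of the complete graph `K_n` on vertices `0, …, n-1`, encoded as
ordered pairs `(i, j)` with `i < j` (one for each unordered edge `{i, j}`). -/
abbrev KEdge (n : ℕ) := {p : Fin n × Fin n // p.1 < p.2}

/-- A coloring of the edges of `K_n` is a Gallai coloring if every cycle of `K_n`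
contains two distinct edges with the same color (no rainbow cycle). -/
def IsGallaiColoring {n : ℕ} {C : Type*} (ε : KEdge n → C) : Prop :=
  ∀ (v : Fin n) (w : (⊤ : SimpleGraph (Fin n)).Walk v v), w.IsCycle →
    ∃ p q : KEdge n, s(p.1.1, p.1.2) ∈ w.edges ∧ s(q.1.1, q.1.2) ∈ w.edges ∧
      p ≠ q ∧ ε p = ε q

open SimpleGraph Set

/-- Two `KEdge`s whose underlying unordered pairs agree are equal. -/
lemma KEdge.eq_of_sym2_eq {n : ℕ} {p q : KEdge n}
    (h : s(p.1.1, p.1.2) = s(q.1.1, q.1.2)) : p = q := by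
  have hp := p.2
  have hq := q.2
  rcases Sym2.eq_iff.mp h with ⟨h1, h2⟩ | ⟨h1, h2⟩
  · exact Subtype.ext (Prod.ext h1 h2)
  · rw [h1, h2] at hp
    exact absurd hq (asymm hp)

/-- An acyclic simple graph on a nonempty finite vertex type has at most
`card V - 1` edges. -/
lemma forest_edge_bound {V : Type*} [Fintype V] [Nonempty V]
    (G : SimpleGraph V) (hG : G.IsAcyclic) :
    G.edgeSet.ncard + 1 ≤ Fintype.card V := by
  classical
  obtain ⟨G₀, hG₀mem, hmaxi⟩ :=
    (Finset.univ.filter (fun H : SimpleGraph V => H.IsAcyclic)).exists_max_image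
      (fun H => H.edgeSet.ncard) ⟨⊥, by simp⟩
  have hG₀ : G₀.IsAcyclic := (Finset.mem_filter.mp hG₀mem).2
  have hconn : G₀.Connected := by
    rw [connected_iff]
    refine ⟨?_, ‹Nonempty V›⟩
    by_contra hpc
    rw [Preconnected] at hpc
    push_neg at hpc
    obtain ⟨u, v, huv⟩ := hpc
    have hne : u ≠ v := by rintro rfl; exact huv (Reachable.refl _)
    have hadj : ¬ G₀.Adj u v := fun h => huv h.reachable
    set G₁ := G₀ ⊔ fromEdgeSet {s(u, v)} with hG₁def
    have hsdiff : G₁ \ fromEdgeSet {s(u, v)} = G₀ := by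
      ext a b
      simp only [hG₁def, sdiff_adj, sup_adj, fromEdgeSet_adj, Set.mem_singleton_iff]
      constructor
      · rintro ⟨h | h, h2⟩
        · exact h
        · exact absurd h h2
      · intro h
        refine ⟨Or.inl h, fun hcon => ?_⟩
        rcases Sym2.eq_iff.mp hcon.1 with ⟨rfl, rfl⟩ | ⟨rfl, rfl⟩
        · exact hadj h
        · exact hadj h.symm
    have hbridge : G₁.IsBridge s(u, v) := by
      rw [isBridge_iff]
      show ¬ (G₁ \ fromEdgeSet {s(u, v)}).Reachable u v
      rw [hsdiff]
      exact huv
    have hG₁acyclic : G₁.IsAcyclic := by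
      intro w c hc
      by_cases he : s(u, v) ∈ c.edges
      · exact hbridge.notMem_edges_of_isCycle hc he
      · have hsub : ∀ e ∈ c.edges, e ∈ G₀.edgeSet := by
          intro e hec
          have h1 := c.edges_subset_edgeSet hec
          rw [hG₁def, edgeSet_sup, edgeSet_fromEdgeSet] at h1
          rcases h1 with h1 | h1
          · exact h1
          · exact absurd (h1.1 ▸ hec) he
        exact hG₀ (c.transfer G₀ hsub) (hc.transfer hsub)
    have hmem : s(u, v) ∉ G₀.edgeSet := hadj
    have hE₁ : G₁.edgeSet = insert s(u, v) G₀.edgeSet := by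
      rw [hG₁def, edgeSet_sup, edgeSet_fromEdgeSet]
      have : ({s(u, v)} : Set (Sym2 V)) \ Sym2.diagSet = {s(u, v)} := by
        ext e
        constructor
        · exact fun h => h.1
        · intro he
          refine ⟨he, ?_⟩
          rw [Set.mem_singleton_iff] at he
          subst he
          exact fun hdiag => hne (Sym2.mk_isDiag_iff.mp hdiag)
      rw [this, Set.union_singleton]
    have hlt := hmaxi G₁ (by simp [hG₁acyclic])
    rw [hE₁, Set.ncard_insert_of_notMem hmem (Set.toFinite _)] at hlt
    omega
  have htree : G₀.IsTree := ⟨hconn, hG₀⟩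
  have hcard := htree.card_edgeFinset
  have hle := hmaxi G (by simp [hG])
  have hEq : G₀.edgeSet.ncard = G₀.edgeFinset.card := by
    rw [← coe_edgeFinset, Set.ncard_coe_finset]
  omega

/-- Every maximal Gallai coloring of `K_n` (`n ≥ 2`), i.e. a Gallai coloring whose
image has exactly `n - 1` colors, has a singleton color: a color in the image
attained by exactly one edge. -/
theorem maximal_gallai_coloring_has_singleton_color
    (n : ℕ) (hn : 2 ≤ n) {C : Type*} (ε : KEdge n → C)
    (hGallai : IsGallaiColoring ε) (hmax : (Set.range ε).ncard = n - 1) :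
    ∃ c ∈ Set.range ε, {e : KEdge n | ε e = c}.ncard = 1 := by
  classical
  by_contra hcon
  push_neg at hcon
  -- every color class has at least two edges
  have htwo : ∀ c ∈ Set.range ε, ∃ e e' : KEdge n, e ≠ e' ∧ ε e = c ∧ ε e' = c := by
    intro c hc
    obtain ⟨e₀, he₀⟩ := id hc
    have hfin : ({e : KEdge n | ε e = c}).Finite := Set.toFinite _
    have h1 : 1 ≤ ({e : KEdge n | ε e = c}).ncard := by
      rw [Nat.one_le_iff_ne_zero]
      intro h0
      rw [Set.ncard_eq_zero hfin] at h0
      exact absurd (h0 ▸ he₀ : e₀ ∈ (∅ : Set (KEdge n))) (Set.notMem_empty _)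
    have h2 : 1 < ({e : KEdge n | ε e = c}).ncard :=
      lt_of_le_of_ne h1 (Ne.symm (hcon c hc))
    obtain ⟨a, b, ha, hb, hab⟩ := (Set.one_lt_ncard_iff hfin).mp h2
    exact ⟨a, b, hab, ha, hb⟩
  -- every vertex has a "lost" color: a color all of whose edges touch it
  have hL : ∀ v : Fin n, ∃ c ∈ Set.range ε,
      ∀ e : KEdge n, ε e = c → v = e.1.1 ∨ v = e.1.2 := by
    intro v
    by_contra hLv
    push_neg at hLv
    -- choose, for each color, an edge of that color avoiding v
    have hch : ∀ c : C, ∃ e : KEdge n,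
        c ∈ Set.range ε → ε e = c ∧ v ≠ e.1.1 ∧ v ≠ e.1.2 := by
      intro c
      by_cases hc : c ∈ Set.range ε
      · obtain ⟨e, he1, he2⟩ := hLv c hc
        exact ⟨e, fun _ => ⟨he1, he2⟩⟩
      · exact ⟨⟨(⟨0, by omega⟩, ⟨1, by omega⟩), by simp [Fin.mk_lt_mk]⟩, fun h => absurd h hc⟩
    choose g hg using hch
    -- the graph on the other vertices formed by the chosen edges
    have hVne : Nonempty {x : Fin n // x ≠ v} := by
      obtain ⟨w, hw⟩ := Fintype.exists_ne_of_one_lt_card (by simp; omega) v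
      exact ⟨⟨w, hw⟩⟩
    set S : Set (Sym2 {x : Fin n // x ≠ v}) :=
      {z | ∃ c ∈ Set.range ε, Sym2.map Subtype.val z = s((g c).1.1, (g c).1.2)} with hSdef
    set G' : SimpleGraph {x : Fin n // x ≠ v} := fromEdgeSet S with hG'def
    -- a hom from G' to the complete graph on Fin n
    let f : G' →g (⊤ : SimpleGraph (Fin n)) :=
      ⟨Subtype.val, fun {a b} hab => by
        simp only [top_adj]
        exact Subtype.val_injective.ne (G'.ne_of_adj hab)⟩
    have hfinj : Function.Injective f := Subtype.val_injective
    have hfval : ⇑f = Subtype.val := rfl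
    -- membership in the edge set pins down the chosen edge
    have hpin : ∀ (p : KEdge n) (z : Sym2 {x : Fin n // x ≠ v}), z ∈ G'.edgeSet →
        Sym2.map Subtype.val z = s(p.1.1, p.1.2) → ∃ c ∈ Set.range ε, p = g c := by
      intro p z hz hzp
      rw [hG'def, edgeSet_fromEdgeSet] at hz
      obtain ⟨c, hc, hmapz⟩ := hz.1
      refine ⟨c, hc, KEdge.eq_of_sym2_eq ?_⟩
      rw [← hzp, hmapz]
    -- G' is acyclic
    have hAc : G'.IsAcyclic := by
      intro x w hw
      obtain ⟨p, q, hp, hq, hpq, hcol⟩ := hGallai x.val (w.map f) (hw.map hfinj)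
      rw [SimpleGraph.Walk.edges_map] at hp hq
      obtain ⟨z₁, hz₁, hz₁p⟩ := List.mem_map.mp hp
      obtain ⟨z₂, hz₂, hz₂q⟩ := List.mem_map.mp hq
      rw [hfval] at hz₁p hz₂q
      obtain ⟨c₁, hc₁, hpc₁⟩ := hpin p z₁ (w.edges_subset_edgeSet hz₁) hz₁p
      obtain ⟨c₂, hc₂, hqc₂⟩ := hpin q z₂ (w.edges_subset_edgeSet hz₂) hz₂q
      have h1 : ε p = c₁ := by rw [hpc₁]; exact (hg c₁ hc₁).1
      have h2 : ε q = c₂ := by rw [hqc₂]; exact (hg c₂ hc₂).1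
      have : c₁ = c₂ := by rw [← h1, ← h2, hcol]
      exact hpq (by rw [hpc₁, hqc₂, this])
    -- the colors inject into the edges of G'
    have hinj : (Set.range ε).ncard ≤ G'.edgeSet.ncard := by
      set Φ : C → Sym2 {x : Fin n // x ≠ v} := fun c =>
        if h : v ≠ (g c).1.1 ∧ v ≠ (g c).1.2 then
          s(⟨(g c).1.1, Ne.symm h.1⟩, ⟨(g c).1.2, Ne.symm h.2⟩)
        else s(Classical.arbitrary _, Classical.arbitrary _) with hΦdef
      have hΦeq : ∀ c (hc : c ∈ Set.range ε),
          Φ c = s((⟨(g c).1.1, Ne.symm (hg c hc).2.1⟩ : {x : Fin n // x ≠ v}),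
                  ⟨(g c).1.2, Ne.symm (hg c hc).2.2⟩) := by
        intro c hc
        rw [hΦdef]
        exact dif_pos ⟨(hg c hc).2.1, (hg c hc).2.2⟩
      have hΦval : ∀ c ∈ Set.range ε,
          Sym2.map Subtype.val (Φ c) = s((g c).1.1, (g c).1.2) := by
        intro c hc
        rw [hΦeq c hc, Sym2.map_pair_eq]
      refine Set.ncard_le_ncard_of_injOn Φ ?_ ?_ (Set.toFinite _)
      · intro c hc
        rw [hG'def, edgeSet_fromEdgeSet]
        constructor
        · exact ⟨c, hc, hΦval c hc⟩
        · intro hdiag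
          rw [Sym2.mem_diagSet, hΦeq c hc, Sym2.mk_isDiag_iff] at hdiag
          exact ne_of_lt (g c).2 (congrArg Subtype.val hdiag)
      · intro c hc c' hc' hcc
        have : s((g c).1.1, (g c).1.2) = s((g c').1.1, (g c').1.2) := by
          rw [← hΦval c hc, ← hΦval c' hc', hcc]
        have hgg : g c = g c' := KEdge.eq_of_sym2_eq this
        rw [← (hg c hc).1, ← (hg c' hc').1, hgg]
    -- contradiction with the forest bound
    have hbound := forest_edge_bound G' hAc
    have hcardV : Fintype.card {x : Fin n // x ≠ v} = n - 1 := by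
      simp [Fintype.card_subtype_compl]
    rw [hcardV] at hbound
    rw [hmax] at hinj
    omega
  choose F hF1 hF2 using hL
  -- F is injective
  have hFinj : Function.Injective F := by
    intro a b hab
    by_contra hne
    obtain ⟨e, e', hee, he, he'⟩ := htwo (F a) (hF1 a)
    have ha1 := hF2 a e he
    have ha2 := hF2 a e' he'
    have hb1 := hF2 b e (by rw [he, hab])
    have hb2 := hF2 b e' (by rw [he', hab])
    have hE := e.2
    have hE' := e'.2
    apply hee
    apply Subtype.ext
    apply Prod.ext
    all_goals
      rcases ha1 with rfl | rfl <;> rcases hb1 with h1 | h1 <;>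
        rcases ha2 with h2 | h2 <;> rcases hb2 with h3 | h3 <;>
      first
        | rfl
        | (exfalso; omega)
        | omega
  -- contradiction: n distinct colors in a set of size n - 1
  have hsub : Set.range F ⊆ Set.range ε := by
    rintro c ⟨a, rfl⟩
    exact hF1 a
  have hcount : (Set.range F).ncard = n := by
    rw [← Set.image_univ, Set.ncard_image_of_injective _ hFinj, Set.ncard_univ]
    simp
  have := Set.ncard_le_ncard hsub (Set.toFinite _)
  rw [hcount, hmax] at this
  omega
end

section
/- Let n ≥ 2 and let ε be a surjective coloring of the edge set {(i,j) : 1 ≤ i < j ≤ n} of the transitive tournament on n vertices using exactly n − 1 colors. Then ε is transitive, i.e., ε(i,k) ∈ {ε(i,j), ε(j,k)} for all 1 ≤ i < j < k ≤ n, if and only if the corresponding edge coloring of the complete graph K_n (coloring the edge {i,j} by ε(min(i,j), max(i,j))) is a Gallai coloring (no rainbow cycle) and the n − 1 colors ε(i, i+1), 1 ≤ i ≤ n−1, are pairwise distinct. -/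
/-- The edge `(a, b)`, for `a < b`. -/
def te {n : ℕ} (a b : Fin n) (h : a < b) : KEdge n := ⟨(a, b), h⟩

/-- A coloring of the edges of the transitive tournament is transitive if
`ε(i,k) ∈ {ε(i,j), ε(j,k)}` for all `i < j < k`. -/
def IsTransitiveColoring {n : ℕ} {C : Type*} (ε : KEdge n → C) : Prop :=
  ∀ (i j k : Fin n) (hij : i < j) (hjk : j < k),
    ε (te i k (hij.trans hjk)) = ε (te i j hij) ∨
      ε (te i k (hij.trans hjk)) = ε (te j k hjk)

/-- The edge `(i, i+1)`. -/
def consecEdge {n : ℕ} (i : ℕ) (h : i + 1 < n) : KEdge n :=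
  te ⟨i, Nat.lt_of_succ_lt h⟩ ⟨i + 1, h⟩ (Fin.mk_lt_mk.mpr (Nat.lt_succ_self i))

namespace TGaux

open SimpleGraph

variable {n : ℕ} {C : Type*}

lemma kedge_eq {p q : KEdge n} (h : s(p.1.1, p.1.2) = s(q.1.1, q.1.2)) : p = q := by
  rw [Sym2.eq_iff] at h
  rcases h with ⟨h1, h2⟩ | ⟨h1, h2⟩
  · exact Subtype.ext (Prod.ext h1 h2)
  · exact absurd p.2 (by rw [h1, h2]; exact not_lt.mpr q.2.le)

def kE (a b : Fin n) (hab : a ≠ b) : KEdge n :=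
  if h : a < b then te a b h else te b a (lt_of_le_of_ne (not_lt.mp h) (Ne.symm hab))

lemma sym2_kE (a b : Fin n) (hab : a ≠ b) :
    s((kE a b hab).1.1, (kE a b hab).1.2) = s(a, b) := by
  unfold kE
  split <;> simp [te, Sym2.eq_swap]

lemma trans_tri {ε : KEdge n → C} (ht : IsTransitiveColoring ε) {m x y : Fin n}
    (hmx : m < x) (hmy : m < y) (hxy : x ≠ y) :
    ε (kE m x hmx.ne) = ε (kE m y hmy.ne) ∨
      ε (kE x y hxy) = ε (kE m x hmx.ne) ∨ ε (kE x y hxy) = ε (kE m y hmy.ne) := by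
  have ex : kE m x hmx.ne = te m x hmx := dif_pos hmx
  have ey : kE m y hmy.ne = te m y hmy := dif_pos hmy
  rcases hxy.lt_or_gt with h | h
  · have exy : kE x y hxy = te x y h := dif_pos h
    rcases ht m x y hmx h with hc | hc
    · left; rw [ex, ey]; exact hc.symm
    · right; right; rw [exy, ey]; exact hc.symm
  · have exy : kE x y hxy = te y x h := dif_neg (not_lt.mpr h.le)
    rcases ht m y x hmy h with hc | hc
    · left; rw [ex, ey]; exact hc
    · right; left; rw [exy, ex]; exact hc.symm

lemma consec_reach {ε : KEdge n → C} (ht : IsTransitiveColoring ε) :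
    ∀ (d : ℕ) (i k : Fin n) (hik : i < k), k.val - i.val ≤ d →
      ∃ (a : ℕ) (ha : a + 1 < n), i.val ≤ a ∧ a + 1 ≤ k.val ∧
        ε (te i k hik) = ε (consecEdge a ha) := by
  intro d
  induction d with
  | zero =>
    intro i k hik h
    exact absurd h (by have := hik; omega)
  | succ d ih =>
    intro i k hik h
    by_cases hk : k.val = i.val + 1
    · refine ⟨i.val, by omega, le_refl _, by omega, ?_⟩
      have : te i k hik = consecEdge i.val (by omega) := by
        apply Subtype.ext
        exact Prod.ext (Fin.ext rfl) (Fin.ext hk)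
      rw [this]
    · have hik' : i.val < k.val := hik
      have hj : i.val + 1 < k.val := by omega
      have hjn : i.val + 1 < n := by have := k.2; omega
      set j : Fin n := ⟨i.val + 1, hjn⟩ with hjdef
      have hij : i < j := by simp [hjdef, Fin.lt_def]
      have hjk : j < k := by simp [hjdef, Fin.lt_def]; omega
      rcases ht i j k hij hjk with hcase | hcase
      · refine ⟨i.val, by omega, le_refl _, by omega, ?_⟩
        have : te i j hij = consecEdge i.val (by omega) := by
          apply Subtype.ext
          exact Prod.ext (Fin.ext rfl) (Fin.ext rfl)
        rw [← this]
        exact hcase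
      · obtain ⟨a, ha, h1, h2, h3⟩ := ih j k hjk (by simp [hjdef]; omega)
        exact ⟨a, ha, by simp [hjdef] at h1; omega, h2, hcase.trans h3⟩

def pw : ∀ (d : ℕ) (i : Fin n) (_ : i.val + d < n),
    (⊤ : SimpleGraph (Fin n)).Walk i ⟨i.val + d, by omega⟩
  | 0, i, h => Walk.nil.copy rfl (Fin.ext (by simp))
  | d+1, i, h =>
    Walk.cons
      (show (⊤ : SimpleGraph (Fin n)).Adj i ⟨i.val + 1, by omega⟩ by
        rw [SimpleGraph.top_adj]; exact Fin.ne_of_val_ne (by simp))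
      ((pw d ⟨i.val + 1, by omega⟩ (by simp; omega)).copy rfl (Fin.ext (by simp; omega)))

lemma pw_edges : ∀ (d : ℕ) (i : Fin n) (h : i.val + d < n) (e : Sym2 (Fin n)),
    e ∈ (pw d i h).edges →
    ∃ (a : ℕ) (ha : a + 1 < n), i.val ≤ a ∧ a + 1 ≤ i.val + d ∧
      e = s((consecEdge a ha).1.1, (consecEdge a ha).1.2) := by
  intro d
  induction d with
  | zero => intro i h e he; rw [pw] at he; simp at he
  | succ d ih =>
    intro i h e he
    rw [pw] at he
    simp only [Walk.edges_cons, Walk.edges_copy, List.mem_cons] at he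
    rcases he with he | he
    · refine ⟨i.val, by omega, le_refl _, by omega, ?_⟩
      rw [he]
      congr 1
    · obtain ⟨a, ha, h1, h2, h3⟩ := ih ⟨i.val + 1, by omega⟩ (by simp; omega) e he
      simp at h1 h2
      exact ⟨a, ha, by omega, by omega, h3⟩

lemma pw_support : ∀ (d : ℕ) (i : Fin n) (h : i.val + d < n) (v : Fin n),
    v ∈ (pw d i h).support → i.val ≤ v.val ∧ v.val ≤ i.val + d := by
  intro d
  induction d with
  | zero => intro i h v hv; rw [pw] at hv; simp at hv; simp [hv]
  | succ d ih =>
    intro i h v hv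
    rw [pw] at hv
    simp only [Walk.support_cons, Walk.support_copy, List.mem_cons] at hv
    rcases hv with hv | hv
    · simp [hv]
    · have := ih ⟨i.val + 1, by omega⟩ (by simp; omega) v hv
      simp at this
      omega

lemma pw_path : ∀ (d : ℕ) (i : Fin n) (h : i.val + d < n), (pw d i h).IsPath := by
  intro d
  induction d with
  | zero => intro i h; rw [pw]; simp [Walk.IsPath.nil]
  | succ d ih =>
    intro i h
    rw [pw]
    rw [Walk.cons_isPath_iff]
    constructor
    · rw [Walk.isPath_copy]; exact ih _ _
    · intro hmem
      rw [Walk.support_copy] at hmem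
      have := pw_support d ⟨i.val + 1, by omega⟩ (by simp; omega) i hmem
      simp at this

lemma gallai_reach {ε : KEdge n → C} (hg : IsGallaiColoring ε)
    (hinj : ∀ (a b : ℕ) (ha : a + 1 < n) (hb : b + 1 < n),
      ε (consecEdge a ha) = ε (consecEdge b hb) → a = b)
    (i k : Fin n) (hik : i < k) :
    ∃ (a : ℕ) (ha : a + 1 < n), i.val ≤ a ∧ a + 1 ≤ k.val ∧
      ε (te i k hik) = ε (consecEdge a ha) := by
  have hik' : i.val < k.val := hik
  by_cases hd1 : k.val = i.val + 1
  · refine ⟨i.val, by omega, le_refl _, by omega, ?_⟩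
    have : te i k hik = consecEdge i.val (by omega) := by
      apply Subtype.ext
      exact Prod.ext (Fin.ext rfl) (Fin.ext hd1)
    rw [this]
  · set d := k.val - i.val with hddef
    have hd2 : 2 ≤ d := by omega
    have hn' : i.val + d < n := by have := k.2; omega
    have hkd : (⟨i.val + d, by omega⟩ : Fin n) = k := Fin.ext (by simp; omega)
    set pwik : (⊤ : SimpleGraph (Fin n)).Walk i k := (pw d i hn').copy rfl hkd with hpwik
    have hadj : (⊤ : SimpleGraph (Fin n)).Adj k i := by
      rw [SimpleGraph.top_adj]; exact Fin.ne_of_val_ne (by omega)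
    set c : (⊤ : SimpleGraph (Fin n)).Walk k k := Walk.cons hadj pwik with hcdef
    have hcyc : c.IsCycle := by
      rw [hcdef, Walk.cons_isCycle_iff]
      constructor
      · rw [hpwik, Walk.isPath_copy]; exact pw_path d i hn'
      · intro hmem
        rw [hpwik, Walk.edges_copy] at hmem
        obtain ⟨a, ha, h1, h2, h3⟩ := pw_edges d i hn' _ hmem
        rw [Sym2.eq_iff] at h3
        simp only [consecEdge, te] at h3
        rcases h3 with ⟨h4, h5⟩ | ⟨h4, h5⟩
        · have := congrArg Fin.val h4
          simp at this; omega
        · have e1 := congrArg Fin.val h4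
          have e2 := congrArg Fin.val h5
          simp at e1 e2; omega
    obtain ⟨p, q, hp, hq, hne, hcol⟩ := hg k c hcyc
    have key : ∀ r : KEdge n, s(r.1.1, r.1.2) ∈ c.edges →
        r = te i k hik ∨ ∃ (a : ℕ) (ha : a + 1 < n), i.val ≤ a ∧ a + 1 ≤ k.val ∧
          r = consecEdge a ha := by
      intro r hr
      rw [hcdef, Walk.edges_cons, hpwik, Walk.edges_copy] at hr
      rcases List.mem_cons.mp hr with h | h
      · left
        exact kedge_eq (h.trans (Sym2.eq_swap))
      · right
        obtain ⟨a, ha, h1, h2, h3⟩ := pw_edges d i hn' _ h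
        exact ⟨a, ha, h1, by omega, kedge_eq h3⟩
    rcases key p hp with hp' | ⟨a, ha, ha1, ha2, hp'⟩ <;>
      rcases key q hq with hq' | ⟨b, hb, hb1, hb2, hq'⟩
    · exact absurd (hp'.trans hq'.symm) hne
    · exact ⟨b, hb, hb1, hb2, by rw [← hp', hcol, hq']⟩
    · exact ⟨a, ha, ha1, ha2, by rw [← hq', ← hcol, hp']⟩
    · exfalso
      have hab : a = b := hinj a b ha hb (by rw [← hp', ← hq', hcol])
      subst hab
      exact hne (hp'.trans hq'.symm)

lemma trans_of {ε : KEdge n → C} (hg : IsGallaiColoring ε)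
    (hinj : ∀ (a b : ℕ) (ha : a + 1 < n) (hb : b + 1 < n),
      ε (consecEdge a ha) = ε (consecEdge b hb) → a = b) :
    IsTransitiveColoring ε := by
  intro i j k hij hjk
  have hij' : i.val < j.val := hij
  have hjk' : j.val < k.val := hjk
  obtain ⟨b, hb, hb1, hb2, hbc⟩ := gallai_reach hg hinj i j hij
  obtain ⟨d, hd, hd1, hd2, hdc⟩ := gallai_reach hg hinj j k hjk
  have hne : ε (te i j hij) ≠ ε (te j k hjk) := by
    intro h
    rw [hbc, hdc] at h
    have := hinj b d hb hd h
    omega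
  have haij : (⊤ : SimpleGraph (Fin n)).Adj i j := by
    rw [SimpleGraph.top_adj]; exact Fin.ne_of_val_ne (by omega)
  have hajk : (⊤ : SimpleGraph (Fin n)).Adj j k := by
    rw [SimpleGraph.top_adj]; exact Fin.ne_of_val_ne (by omega)
  have haki : (⊤ : SimpleGraph (Fin n)).Adj k i := by
    rw [SimpleGraph.top_adj]; exact Fin.ne_of_val_ne (by omega)
  set tri : (⊤ : SimpleGraph (Fin n)).Walk i i :=
    Walk.cons haij (Walk.cons hajk (Walk.cons haki Walk.nil)) with htri
  have hcyc : tri.IsCycle := by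
    rw [htri, Walk.cons_isCycle_iff]
    constructor
    · simp only [Walk.cons_isPath_iff, Walk.support_cons, Walk.support_nil, List.mem_cons,
        List.mem_singleton, List.not_mem_nil]
      simp [Walk.IsPath.nil, Fin.ext_iff]
      omega
    · simp only [Walk.edges_cons, Walk.edges_nil, List.mem_cons, List.not_mem_nil, or_false,
        Sym2.eq_iff, Fin.ext_iff]
      simp [Fin.ext_iff]
      omega
  obtain ⟨p, q, hp, hq, hne', hcol⟩ := hg i tri hcyc
  have key : ∀ r : KEdge n, s(r.1.1, r.1.2) ∈ tri.edges →
      r = te i j hij ∨ r = te j k hjk ∨ r = te i k (hij.trans hjk) := by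
    intro r hr
    rw [htri] at hr
    simp only [Walk.edges_cons, Walk.edges_nil, List.mem_cons, List.not_mem_nil,
      or_false] at hr
    rcases hr with h | h | h
    · exact Or.inl (kedge_eq h)
    · exact Or.inr (Or.inl (kedge_eq h))
    · exact Or.inr (Or.inr (kedge_eq (h.trans Sym2.eq_swap)))
  rcases key p hp with hp' | hp' | hp' <;> rcases key q hq with hq' | hq' | hq'
  · exact absurd (hp'.trans hq'.symm) hne'
  · rw [hp', hq'] at hcol; exact absurd hcol hne
  · rw [hp', hq'] at hcol; exact Or.inl hcol.symm
  · rw [hp', hq'] at hcol; exact absurd hcol.symm hne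
  · exact absurd (hp'.trans hq'.symm) hne'
  · rw [hp', hq'] at hcol; exact Or.inr hcol.symm
  · rw [hp', hq'] at hcol; exact Or.inl hcol
  · rw [hp', hq'] at hcol; exact Or.inr hcol
  · exact absurd (hp'.trans hq'.symm) hne'

lemma no_rainbow {ε : KEdge n → C} (ht : IsTransitiveColoring ε) :
    ∀ (N : ℕ) (v : Fin n) (w : (⊤ : SimpleGraph (Fin n)).Walk v v), w.IsCycle → w.length ≤ N →
      ∃ p q : KEdge n, s(p.1.1, p.1.2) ∈ w.edges ∧ s(q.1.1, q.1.2) ∈ w.edges ∧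
        p ≠ q ∧ ε p = ε q := by
  intro N
  induction N with
  | zero => intro v w hw hl; have := hw.three_le_length; omega
  | succ N ih =>
    intro v w hw hl
    classical
    have hvne : v ∈ w.support := w.start_mem_support
    have hne : w.support.toFinset.Nonempty := ⟨v, by simpa using hvne⟩
    set m := w.support.toFinset.min' hne with hmdef
    have hmem : m ∈ w.support := by
      have := w.support.toFinset.min'_mem hne; simpa using this
    have hminw : ∀ z ∈ w.support, m ≤ z := fun z hz =>
      w.support.toFinset.min'_le z (by simpa using hz)
    obtain ⟨c, hcyc, hperm, hmin, hclen⟩ :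
        ∃ c : (⊤ : SimpleGraph (Fin n)).Walk m m, c.IsCycle ∧ c.edges.Perm w.edges ∧
          (∀ z ∈ c.support, m ≤ z) ∧ c.length ≤ N + 1 := by
      refine ⟨w.rotate m hmem, hw.rotate hmem, (w.rotate_edges m hmem).perm, ?_, ?_⟩
      · intro z hz
        rw [Walk.support_eq_cons] at hz
        rcases List.mem_cons.mp hz with h | h
        · exact le_of_eq h.symm
        · have hz2 : z ∈ w.support.tail := ((w.support_rotate m hmem).perm.mem_iff).mp h
          exact hminw z (List.mem_of_mem_tail hz2)
      · have h1 : (w.rotate m hmem).edges.length = w.edges.length :=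
          ((w.rotate_edges m hmem).perm.length_eq)
        rw [Walk.length_edges, Walk.length_edges] at h1
        omega
    suffices h : ∃ p q : KEdge n, s(p.1.1, p.1.2) ∈ c.edges ∧ s(q.1.1, q.1.2) ∈ c.edges ∧
        p ≠ q ∧ ε p = ε q by
      obtain ⟨p, q, h1, h2, h3, h4⟩ := h
      exact ⟨p, q, hperm.subset h1, hperm.subset h2, h3, h4⟩
    clear_value m
    clear hperm hl hw hmem hminw hne hvne hmdef
    cases c with
    | nil => have := hcyc.three_le_length; simp at this
    | @cons _ x _ hadj p =>
      have hmx : m < x :=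
        lt_of_le_of_ne (hmin x (by simp [Walk.support_cons, p.start_mem_support])) hadj.ne
      obtain ⟨hp_path, hp_edge⟩ := (Walk.cons_isCycle_iff p hadj).mp hcyc
      have hrp_path : p.reverse.IsPath := hp_path.reverse
      cases hrev : p.reverse with
      | nil => exact absurd hmx (lt_irrefl m)
      | @cons _ y _ h2 s =>
        rw [hrev] at hrp_path
        obtain ⟨hs_path, hm_not_s⟩ := (Walk.cons_isPath_iff h2 s).mp hrp_path
        have hy_in : y ∈ p.support := by
          have hy1 : y ∈ p.reverse.support := by
            rw [hrev]; simp [Walk.support_cons, s.start_mem_support]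
          rwa [Walk.support_reverse, List.mem_reverse] at hy1
        have hmy : m < y :=
          lt_of_le_of_ne (hmin y (by simp [Walk.support_cons, hy_in])) h2.ne
        have hxy : x ≠ y := by
          intro hxyeq
          subst hxyeq
          have hsnil := (Walk.isPath_iff_eq_nil (p := s)).mp hs_path
          have hlen1 : p.reverse.length = p.length := Walk.length_reverse p
          rw [hrev, hsnil] at hlen1
          simp at hlen1
          have h3 := hcyc.three_le_length
          rw [Walk.length_cons, ← hlen1] at h3
          simp at h3
        have hmx_edge : s(m, x) ∈ (Walk.cons hadj p).edges := by simp [Walk.edges_cons]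
        have hmy_edge : s(m, y) ∈ (Walk.cons hadj p).edges := by
          have h1 : s(m, y) ∈ p.reverse.edges := by rw [hrev]; simp [Walk.edges_cons]
          rw [Walk.edges_reverse, List.mem_reverse] at h1
          simp [Walk.edges_cons, h1]
        have hs_sub : ∀ e ∈ s.edges, e ∈ (Walk.cons hadj p).edges := by
          intro e he
          have h1 : e ∈ p.reverse.edges := by rw [hrev]; simp [Walk.edges_cons, he]
          rw [Walk.edges_reverse, List.mem_reverse] at h1
          simp [Walk.edges_cons, h1]
        rcases trans_tri ht hmx hmy hxy with hcase | hcase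
        · refine ⟨kE m x hmx.ne, kE m y hmy.ne, by rw [sym2_kE]; exact hmx_edge,
            by rw [sym2_kE]; exact hmy_edge, ?_, hcase⟩
          intro heq
          have h1 := congrArg (fun r : KEdge n => s(r.1.1, r.1.2)) heq
          simp only [sym2_kE, Sym2.eq_iff] at h1
          rcases h1 with ⟨_, h3⟩ | ⟨h3, _⟩
          · exact hxy h3
          · exact hmy.ne h3
        · obtain ⟨z, hmz, hz_edge, hz_col⟩ : ∃ (z : Fin n) (hmz : m < z),
              s(m, z) ∈ (Walk.cons hadj p).edges ∧ ε (kE x y hxy) = ε (kE m z hmz.ne) := by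
            rcases hcase with h | h
            · exact ⟨x, hmx, hmx_edge, h⟩
            · exact ⟨y, hmy, hmy_edge, h⟩
          by_cases hchord : s(x, y) ∈ s.edges
          · refine ⟨kE m z hmz.ne, kE x y hxy, by rw [sym2_kE]; exact hz_edge,
              by rw [sym2_kE]; exact hs_sub _ hchord, ?_, hz_col.symm⟩
            intro heq
            have h1 := congrArg (fun r : KEdge n => s(r.1.1, r.1.2)) heq
            simp only [sym2_kE, Sym2.eq_iff] at h1
            rcases h1 with ⟨h3, _⟩ | ⟨h3, _⟩
            · exact hmx.ne h3
            · exact hmy.ne h3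
          · have hadj2 : (⊤ : SimpleGraph (Fin n)).Adj x y := by
              rw [SimpleGraph.top_adj]; exact hxy
            have hc'cyc : (Walk.cons hadj2 s).IsCycle :=
              (Walk.cons_isCycle_iff s hadj2).mpr ⟨hs_path, hchord⟩
            have hlen : (Walk.cons hadj2 s).length ≤ N := by
              have h1 : p.reverse.length = p.length := Walk.length_reverse p
              rw [hrev] at h1
              rw [Walk.length_cons] at h1 ⊢
              rw [Walk.length_cons] at hclen
              omega
            obtain ⟨p₁, q₁, hp₁, hq₁, hne₁, hcol₁⟩ := ih x (Walk.cons hadj2 s) hc'cyc hlen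
            have key : ∀ r : KEdge n, s(r.1.1, r.1.2) ∈ (Walk.cons hadj2 s).edges →
                s(r.1.1, r.1.2) ∈ s.edges ∨ r = kE x y hxy := by
              intro r hr
              rw [Walk.edges_cons] at hr
              rcases List.mem_cons.mp hr with h | h
              · right; exact kedge_eq (h.trans (sym2_kE x y hxy).symm)
              · left; exact h
            have repl : ∀ r : KEdge n, s(r.1.1, r.1.2) ∈ s.edges → r ≠ kE m z hmz.ne := by
              intro r hr heq
              rw [heq, sym2_kE] at hr
              exact hm_not_s (s.fst_mem_support_of_mem_edges hr)
            rcases key p₁ hp₁ with hp₂ | hp₂ <;> rcases key q₁ hq₁ with hq₂ | hq₂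
            · exact ⟨p₁, q₁, hs_sub _ hp₂, hs_sub _ hq₂, hne₁, hcol₁⟩
            · refine ⟨p₁, kE m z hmz.ne, hs_sub _ hp₂, by rw [sym2_kE]; exact hz_edge,
                repl p₁ hp₂, ?_⟩
              rw [hcol₁, hq₂]; exact hz_col
            · refine ⟨kE m z hmz.ne, q₁, by rw [sym2_kE]; exact hz_edge, hs_sub _ hq₂,
                fun h => repl q₁ hq₂ h.symm, ?_⟩
              rw [← hcol₁, hp₂]; exact hz_col.symm
            · rw [hp₂, hq₂] at hne₁; exact absurd rfl hne₁

lemma inj_of_trans (hn : 2 ≤ n) {ε : KEdge n → C} (ht : IsTransitiveColoring ε)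
    (hsurj : (Set.range ε).ncard = n - 1) :
    Function.Injective
      (fun i : Fin (n - 1) => ε (consecEdge i.1 (by have := i.2; omega))) := by
  classical
  set f : Fin (n - 1) → C := fun i => ε (consecEdge i.1 (by have := i.2; omega)) with hf
  have hrange : Set.range ε ⊆ Set.range f := by
    rintro _ ⟨p, rfl⟩
    have hp : p = te p.1.1 p.1.2 p.2 := rfl
    obtain ⟨a, ha, _, _, h3⟩ := consec_reach ht n p.1.1 p.1.2 p.2 (by omega)
    refine ⟨⟨a, by omega⟩, ?_⟩
    show ε (consecEdge a _) = ε p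
    rw [hp, h3]
  have hsub2 : Set.range f ⊆ Set.range ε := by
    rintro _ ⟨i, rfl⟩; exact ⟨_, rfl⟩
  have heq : Set.range f = Set.range ε := le_antisymm hsub2 hrange
  rw [← heq] at hsurj
  have hco : Set.range f = ↑(Finset.univ.image f) := by
    rw [Finset.coe_image, Finset.coe_univ, Set.image_univ]
  rw [hco, Set.ncard_coe_finset] at hsurj
  have hcard : (Finset.univ.image f).card = (Finset.univ : Finset (Fin (n - 1))).card := by
    rw [hsurj, Finset.card_univ, Fintype.card_fin]
  have hinj := Finset.card_image_iff.mp hcard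
  intro a b hab
  exact hinj (by simp) (by simp) hab

end TGaux

/-- Let `n ≥ 2` and let `ε` be a coloring of the edges of the transitive tournament
on `n` vertices using exactly `n - 1` colors.  Then `ε` is transitive if and only
if the corresponding edge coloring of `K_n` is a Gallai coloring and the `n - 1`
colors of the consecutive edges `(i, i+1)` are pairwise distinct. -/
theorem transitive_iff_gallai_and_rainbow_path
    (n : ℕ) (hn : 2 ≤ n) {C : Type*} (ε : KEdge n → C)
    (hsurj : (Set.range ε).ncard = n - 1) :
    IsTransitiveColoring ε ↔
      (IsGallaiColoring ε ∧
        Function.Injective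
          (fun i : Fin (n - 1) => ε (consecEdge i.1 (by have := i.2; omega)))) := by
  constructor
  · intro ht
    exact ⟨fun v w hw => TGaux.no_rainbow ht w.length v w hw le_rfl,
      TGaux.inj_of_trans hn ht hsurj⟩
  · rintro ⟨hg, hinj⟩
    have hinj' : ∀ (a b : ℕ) (ha : a + 1 < n) (hb : b + 1 < n),
        ε (consecEdge a ha) = ε (consecEdge b hb) → a = b := by
      intro a b ha hb h
      have h2 : (⟨a, by omega⟩ : Fin (n - 1)) = ⟨b, by omega⟩ := hinj h
      exact congrArg Fin.val h2
    exact TGaux.trans_of hg hinj'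
end
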